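/- arXiv:2003.13122 — 4 statements merged into one kernel-verified Lean document; each statement's English description precedes it below -/
import Mathlib

section
/- For every dimension d ≥ 1 and every 0 < r < 1, there exists a constant c_r > 0 (independent of d) such that the following holds: for every integer N ≥ 2 and every probability measure μ on [0,1]^d of the form μ = Σ_{i=1}^∞ α_i δ_{y_i} with nonnegative weights α_i satisfying Σ_i α_i = 1 and α_i ≤ r^{i−1} α_1 for all i ∈ ℕ, there exist points x_1, …, x_N ∈ [0,1]^d such that the empirical measure ν_N satisfies ρ(μ; ν_N) ≤ c_r · log(N)/N. -/
open MeasureTheory Set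
open scoped ENNReal

/-- The empirical measure `ν_N = (1/N) ∑_{i=1}^N δ_{x_i}` associated to the points
`x 0, …, x (N-1)` in `[0,1]^d ⊆ ℝ^d`. -/
noncomputable def empMeasure (d N : ℕ) (x : Fin N → (Fin d → ℝ)) : Measure (Fin d → ℝ) :=
  (N : ℝ≥0∞)⁻¹ • ∑ i : Fin N, Measure.dirac (x i)

/-- The discrete measure `μ = ∑_{i=1}^∞ α_i δ_{y_i}`. -/
noncomputable def discreteMeasure (d : ℕ) (α : ℕ → ℝ) (y : ℕ → (Fin d → ℝ)) :
    Measure (Fin d → ℝ) :=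
  Measure.sum fun i => ENNReal.ofReal (α i) • Measure.dirac (y i)

lemma discrete_toReal (d : ℕ) (α : ℕ → ℝ) (hα : ∀ i, 0 ≤ α i) (hsummable : Summable α)
    (y : ℕ → (Fin d → ℝ)) {A : Set (Fin d → ℝ)} (hA : MeasurableSet A) :
    ((discreteMeasure d α y) A).toReal
      = ∑' i, α i * Set.indicator A (fun _ => (1:ℝ)) (y i) := by
  have hI0 : ∀ z, 0 ≤ Set.indicator A (fun _ => (1:ℝ)) z := by
    intro z; by_cases hz : z ∈ A <;> simp [hz]
  have hI1 : ∀ z, Set.indicator A (fun _ => (1:ℝ)) z ≤ 1 := by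
    intro z; by_cases hz : z ∈ A <;> simp [hz]
  have hsum2 : Summable (fun i => α i * Set.indicator A (fun _ => (1:ℝ)) (y i)) := by
    apply Summable.of_nonneg_of_le (fun i => mul_nonneg (hα i) (hI0 _))
      (fun i => ?_) hsummable
    calc α i * Set.indicator A (fun _ => (1:ℝ)) (y i) ≤ α i * 1 :=
          mul_le_mul_of_nonneg_left (hI1 _) (hα i)
      _ = α i := mul_one _
  have hterm : ∀ i, (ENNReal.ofReal (α i) • Measure.dirac (y i)) A
      = ENNReal.ofReal (α i * Set.indicator A (fun _ => (1:ℝ)) (y i)) := by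
    intro i
    rw [Measure.smul_apply, smul_eq_mul, Measure.dirac_apply' _ hA,
      ENNReal.ofReal_mul (hα i)]
    congr 1
    by_cases hz : y i ∈ A <;> simp [hz]
  rw [discreteMeasure, Measure.sum_apply _ hA, tsum_congr hterm,
    ← ENNReal.ofReal_tsum_of_nonneg (fun i => mul_nonneg (hα i) (hI0 _)) hsum2,
    ENNReal.toReal_ofReal (tsum_nonneg (fun i => mul_nonneg (hα i) (hI0 _)))]

lemma emp_toReal (d N : ℕ) (x : Fin N → (Fin d → ℝ)) {A : Set (Fin d → ℝ)}
    (hA : MeasurableSet A) :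
    ((empMeasure d N x) A).toReal
      = (N:ℝ)⁻¹ * ∑ j : Fin N, Set.indicator A (fun _ => (1:ℝ)) (x j) := by
  have hI0 : ∀ z, 0 ≤ Set.indicator A (fun _ => (1:ℝ)) z := by
    intro z; by_cases hz : z ∈ A <;> simp [hz]
  have hterm : ∀ j : Fin N, Measure.dirac (x j) A
      = ENNReal.ofReal (Set.indicator A (fun _ => (1:ℝ)) (x j)) := by
    intro j
    rw [Measure.dirac_apply' _ hA]
    by_cases hz : x j ∈ A <;> simp [hz]
  rw [empMeasure, Measure.smul_apply, Measure.finset_sum_apply, smul_eq_mul,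
    Finset.sum_congr rfl (fun j _ => hterm j),
    ← ENNReal.ofReal_sum_of_nonneg (fun j _ => hI0 _),
    ENNReal.toReal_mul, ENNReal.toReal_ofReal (Finset.sum_nonneg (fun j _ => hI0 _))]
  congr 1
  simp

set_option maxHeartbeats 1000000 in
/-- For every `0 < r < 1` there is a constant `c_r > 0`, independent of the dimension `d`,
such that for every `d ≥ 1`, every `N ≥ 2` and every discrete probability measure
`μ = ∑ α_i δ_{y_i}` on `[0,1]^d` with `α_i ≤ r^(i-1) α_1`, there are points
`x_1, …, x_N ∈ [0,1]^d` whose empirical measure `ν_N` satisfies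
`ρ(μ; ν_N) ≤ c_r log N / N`, where `ρ` is the total variation distance
(supremum over Borel sets). -/
theorem stmt0 (r : ℝ) (hr0 : 0 < r) (hr1 : r < 1) :
    ∃ c : ℝ, 0 < c ∧
      ∀ (d : ℕ), 1 ≤ d →
      ∀ (N : ℕ), 2 ≤ N →
      ∀ (α : ℕ → ℝ) (y : ℕ → (Fin d → ℝ)),
        (∀ i, 0 ≤ α i) →
        (∑' i, α i) = 1 →
        (∀ i, y i ∈ Icc (0 : Fin d → ℝ) 1) →
        (∀ i : ℕ, α i ≤ r ^ i * α 0) →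
        ∃ x : Fin N → (Fin d → ℝ),
          (∀ i, x i ∈ Icc (0 : Fin d → ℝ) 1) ∧
          ∀ A : Set (Fin d → ℝ), MeasurableSet A →
            |((discreteMeasure d α y) A).toReal - ((empMeasure d N x) A).toReal| ≤
              c * Real.log N / N := by
  have hlr : Real.log r < 0 := Real.log_neg hr0 hr1
  have hlr' : 0 < -Real.log r := by linarith
  have h2 : (0:ℝ) < Real.log 2 := Real.log_pos (by norm_num)
  have h1r : (0:ℝ) < 1 - r := by linarith
  set c : ℝ := 2 / (-Real.log r) + (2 + 2 / (1 - r)) / Real.log 2 with hcdef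
  have hcpos : 0 < c := by positivity
  refine ⟨c, hcpos, ?_⟩
  intro d _hd N hN α y hα hsum hy hgeo
  have hNR : (2:ℝ) ≤ (N:ℝ) := by exact_mod_cast hN
  have hN0 : (0:ℝ) < N := by linarith
  set L := Real.log N with hLdef
  have hL : Real.log 2 ≤ L := Real.log_le_log (by norm_num) hNR
  have hL0 : 0 < L := lt_of_lt_of_le h2 hL
  set M : ℕ := ⌈L / (-Real.log r)⌉₊ + 1 with hMdef
  have hM1 : 1 ≤ M := Nat.le_add_left 1 _
  have hrM : r ^ M ≤ (N:ℝ)⁻¹ := by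
    have h1 : L / (-Real.log r) ≤ (M:ℝ) := by
      refine le_trans (Nat.le_ceil _) ?_
      push_cast [hMdef]; linarith [Nat.le_ceil (L / (-Real.log r))]
    have h2' : L ≤ (M:ℝ) * (-Real.log r) := by
      rw [div_le_iff₀ hlr'] at h1; linarith
    have e1 : r ^ M = Real.exp ((M:ℝ) * Real.log r) := by
      rw [← Real.log_pow, Real.exp_log (pow_pos hr0 M)]
    have e2 : (N:ℝ)⁻¹ = Real.exp (-L) := by
      rw [hLdef, ← Real.log_inv, Real.exp_log (by positivity)]
    rw [e1, e2]
    exact Real.exp_le_exp.mpr (by linarith)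
  have hMub : ((M:ℝ) - 1) ≤ L / (-Real.log r) + 1 := by
    have := Nat.ceil_lt_add_one (a := L / (-Real.log r)) (by positivity)
    push_cast [hMdef]; linarith
  have hsummable : Summable α := by
    by_contra h
    rw [tsum_eq_zero_of_not_summable h] at hsum; norm_num at hsum
  have hα0 : α 0 ≤ 1 := by
    have := Summable.le_tsum hsummable 0 (fun j _ => hα j)
    rwa [hsum] at this
  have hαle : ∀ i, α i ≤ r ^ i := by
    intro i
    refine (hgeo i).trans ?_
    nlinarith [pow_pos hr0 i]
  -- the floor counts
  set S : ℕ := ∑ k ∈ Finset.Ico 1 M, ⌊(N:ℝ) * α k⌋₊ with hSdef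
  have hIcole : ∑ k ∈ Finset.Ico 1 M, α k ≤ 1 := by
    rw [← hsum]
    exact Summable.sum_le_tsum _ (fun i _ => hα i) hsummable
  have hSle : S ≤ N := by
    have h1 : (S:ℝ) ≤ (N:ℝ) := by
      rw [hSdef]
      push_cast
      calc ∑ k ∈ Finset.Ico 1 M, ((⌊(N:ℝ) * α k⌋₊ : ℝ))
          ≤ ∑ k ∈ Finset.Ico 1 M, (N:ℝ) * α k :=
            Finset.sum_le_sum (fun k _ => Nat.floor_le (mul_nonneg (le_of_lt hN0) (hα k)))
        _ = (N:ℝ) * ∑ k ∈ Finset.Ico 1 M, α k := by rw [Finset.mul_sum]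
        _ ≤ (N:ℝ) * 1 := by
            exact mul_le_mul_of_nonneg_left hIcole (le_of_lt hN0)
        _ = N := mul_one _
    exact_mod_cast h1
  set m : ℕ → ℕ := fun i => if i = 0 then N - S else if i < M then ⌊(N:ℝ) * α i⌋₊ else 0
    with hmdef
  have hmIco : ∀ i ∈ Finset.Ico 1 M, m i = ⌊(N:ℝ) * α i⌋₊ := by
    intro i hi
    obtain ⟨h1, h2⟩ := Finset.mem_Ico.mp hi
    simp only [hmdef]
    rw [if_neg (by omega), if_pos h2]
  have hmsum : ∑ i ∈ Finset.range M, m i = N := by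
    rw [Finset.range_eq_Ico, Finset.sum_eq_sum_Ico_succ_bot (by omega : 0 < M)]
    rw [Finset.sum_congr rfl hmIco]
    have hm0 : m 0 = N - S := by simp [hmdef]
    rw [hm0, ← hSdef]
    omega
  set β : ℕ → ℝ := fun i => (m i : ℝ) / N with hβdef
  have hβ0 : ∀ i, 0 ≤ β i := fun i => by positivity
  have hβsum : ∑ i ∈ Finset.range M, β i = 1 := by
    rw [hβdef]
    simp only
    rw [← Finset.sum_div, ← Nat.cast_sum, hmsum, div_self (ne_of_gt hN0)]
  have hβle : ∀ i ∈ Finset.Ico 1 M, β i ≤ α i := by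
    intro i hi
    rw [hβdef]
    simp only [hmIco i hi]
    rw [div_le_iff₀ hN0]
    calc ((⌊(N:ℝ) * α i⌋₊ : ℝ)) ≤ (N:ℝ) * α i := Nat.floor_le (mul_nonneg (le_of_lt hN0) (hα i))
      _ = α i * N := mul_comm _ _
  have hβge : ∀ i ∈ Finset.Ico 1 M, α i - β i ≤ (N:ℝ)⁻¹ := by
    intro i hi
    rw [hβdef]; simp only [hmIco i hi]
    have h := Nat.lt_floor_add_one ((N:ℝ) * α i)
    rw [sub_le_iff_le_add, inv_eq_one_div, ← add_div, le_div_iff₀ hN0]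
    linarith [h]
  have hβouter : ∀ i, i ∉ Finset.range M → β i = 0 := by
    intro i hi
    rw [Finset.mem_range, not_lt] at hi
    rw [hβdef]
    simp only [hmdef]
    rw [if_neg (by omega), if_neg (by omega)]
    simp
  -- E and t
  set E : ℝ := ∑ i ∈ Finset.Ico 1 M, (α i - β i) with hEdef
  have hE0 : 0 ≤ E := Finset.sum_nonneg (fun i hi => sub_nonneg.mpr (hβle i hi))
  have hEle : E ≤ ((M:ℝ) - 1) * (N:ℝ)⁻¹ := by
    calc E ≤ ∑ i ∈ Finset.Ico 1 M, (N:ℝ)⁻¹ := Finset.sum_le_sum hβge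
      _ = ((Finset.Ico 1 M).card : ℝ) * (N:ℝ)⁻¹ := by rw [Finset.sum_const, nsmul_eq_mul]
      _ = ((M:ℝ) - 1) * (N:ℝ)⁻¹ := by
          rw [Nat.card_Ico]; congr 1; rw [Nat.cast_sub hM1]; norm_num
  have hsummtail : Summable (fun i => α (i + M)) := (summable_nat_add_iff M).mpr hsummable
  set t : ℝ := ∑' i, α (i + M) with htdef
  have ht0 : 0 ≤ t := tsum_nonneg (fun i => hα _)
  have hgeosum : Summable (fun i : ℕ => r ^ i) := summable_geometric_of_lt_one (le_of_lt hr0) hr1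
  have hgeosum' : Summable (fun i : ℕ => r ^ (i + M)) := by
    simpa [pow_add] using hgeosum.mul_right (r ^ M)
  have htle : t ≤ r ^ M * (1 - r)⁻¹ := by
    calc t ≤ ∑' i, r ^ (i + M) := Summable.tsum_le_tsum (fun i => hαle _) hsummtail hgeosum'
      _ = (∑' i : ℕ, r ^ i) * r ^ M := by
          simp only [pow_add]
          exact tsum_mul_right
      _ = (1 - r)⁻¹ * r ^ M := by rw [tsum_geometric_of_lt_one (le_of_lt hr0) hr1]
      _ = r ^ M * (1 - r)⁻¹ := mul_comm _ _
  have hrangesplit : ∀ f : ℕ → ℝ,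
      ∑ i ∈ Finset.range M, f i = f 0 + ∑ i ∈ Finset.Ico 1 M, f i := by
    intro f
    rw [Finset.range_eq_Ico, Finset.sum_eq_sum_Ico_succ_bot (by omega : 0 < M)]
  have hsplit : α 0 + ∑ i ∈ Finset.Ico 1 M, α i + t = 1 := by
    have h := Summable.sum_add_tsum_nat_add M hsummable
    rw [hsum, hrangesplit α] at h
    rw [htdef]; linarith
  have hβ0α0 : β 0 - α 0 = E + t := by
    have hb : β 0 + ∑ i ∈ Finset.Ico 1 M, β i = 1 := by
      rw [← hβsum, hrangesplit β]
    rw [hEdef, Finset.sum_sub_distrib]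
    linarith
  -- D
  have hβsummable : Summable β := summable_of_ne_finset_zero (s := Finset.range M) hβouter
  have habssummable : Summable (fun i => |α i - β i|) := (hsummable.sub hβsummable).abs
  have hD : ∑' i, |α i - β i| = 2 * E + 2 * t := by
    have h := (Summable.sum_add_tsum_nat_add M habssummable).symm
    have htail : ∑' i, |α (i + M) - β (i + M)| = t := by
      rw [htdef]
      refine tsum_congr (fun i => ?_)
      rw [hβouter (i + M) (by simp), sub_zero, abs_of_nonneg (hα _)]
    have hhead : ∑ i ∈ Finset.range M, |α i - β i| = (E + t) + E := by
      rw [hrangesplit (fun i => |α i - β i|)]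
      have h0 : |α 0 - β 0| = E + t := by
        rw [abs_sub_comm, abs_of_nonneg (by linarith), hβ0α0]
      have h1 : ∑ i ∈ Finset.Ico 1 M, |α i - β i| = E := by
        rw [hEdef]
        exact Finset.sum_congr rfl (fun i hi => abs_of_nonneg (sub_nonneg.mpr (hβle i hi)))
      rw [h0, h1]
    rw [h, htail, hhead]; ring
  -- the points
  set T := (Finset.range M).sigma (fun i => Finset.range (m i)) with hT
  have hTcard : T.card = N := by rw [hT, Finset.card_sigma]; simpa using hmsum
  have hcard : Fintype.card {s // s ∈ T} = N := by rw [Fintype.card_coe]; exact hTcard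
  let e : Fin N ≃ {s // s ∈ T} := (Fintype.equivFinOfCardEq hcard).symm
  set x : Fin N → (Fin d → ℝ) := fun j => y ((e j).val.1) with hxdef
  have hsum_x : ∀ F : (Fin d → ℝ) → ℝ,
      ∑ j : Fin N, F (x j) = ∑ i ∈ Finset.range M, (m i : ℝ) * F (y i) := by
    intro F
    have h1 : ∑ j : Fin N, F (y ((e j).val.1)) = ∑ s : {s // s ∈ T}, F (y s.val.1) :=
      Equiv.sum_comp e (fun s => F (y s.val.1))
    rw [hxdef, h1]
    have h2 : ∑ s : {s // s ∈ T}, F (y s.val.1) = ∑ s ∈ T, F (y s.1) :=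
      Finset.sum_coe_sort T (fun s => F (y s.1))
    rw [h2, hT, Finset.sum_sigma]
    simp [mul_comm]
  refine ⟨x, fun j => hy _, ?_⟩
  intro A hA
  set I : (Fin d → ℝ) → ℝ := Set.indicator A (fun _ => (1:ℝ)) with hIdef
  have hI0 : ∀ z, 0 ≤ I z := by
    intro z; rw [hIdef]; by_cases hz : z ∈ A <;> simp [hz]
  have hI1 : ∀ z, I z ≤ 1 := by
    intro z; rw [hIdef]; by_cases hz : z ∈ A <;> simp [hz]
  have hsumμ : Summable (fun i => α i * I (y i)) := by
    apply Summable.of_nonneg_of_le (fun i => mul_nonneg (hα i) (hI0 _))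
      (fun i => ?_) hsummable
    calc α i * I (y i) ≤ α i * 1 := mul_le_mul_of_nonneg_left (hI1 _) (hα i)
      _ = α i := mul_one _
  have hsumν : Summable (fun i => β i * I (y i)) :=
    summable_of_ne_finset_zero (s := Finset.range M)
      (fun i hi => by rw [hβouter i hi, zero_mul])
  have hμ : ((discreteMeasure d α y) A).toReal = ∑' i, α i * I (y i) :=
    discrete_toReal d α hα hsummable y hA
  have hν : ((empMeasure d N x) A).toReal = ∑' i, β i * I (y i) := by
    rw [emp_toReal d N x hA, hsum_x I]
    rw [Finset.mul_sum]
    have heq : ∀ i ∈ Finset.range M, (N:ℝ)⁻¹ * ((m i : ℝ) * I (y i)) = β i * I (y i) := by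
      intro i _
      rw [hβdef]
      field_simp
    rw [Finset.sum_congr rfl heq]
    exact (tsum_eq_sum (fun i hi => by rw [hβouter i hi, zero_mul])).symm
  rw [hμ, hν, ← Summable.tsum_sub hsumμ hsumν]
  have hbound1 : |∑' i, (α i * I (y i) - β i * I (y i))| ≤ ∑' i, |α i - β i| := by
    have hf : ∀ i, |α i * I (y i) - β i * I (y i)| ≤ |α i - β i| := by
      intro i
      rw [← sub_mul, abs_mul]
      calc |α i - β i| * |I (y i)| ≤ |α i - β i| * 1 := by
            refine mul_le_mul_of_nonneg_left ?_ (abs_nonneg _)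
            rw [abs_of_nonneg (hI0 _)]; exact hI1 _
        _ = |α i - β i| := mul_one _
    have hfs : Summable (fun i => |α i * I (y i) - β i * I (y i)|) :=
      Summable.of_nonneg_of_le (fun i => abs_nonneg _) hf habssummable
    calc |∑' i, (α i * I (y i) - β i * I (y i))|
        ≤ ∑' i, |α i * I (y i) - β i * I (y i)| := by
          have hfs' : Summable (fun i => ‖α i * I (y i) - β i * I (y i)‖) := by
            simpa [Real.norm_eq_abs] using hfs
          have hnorm := norm_tsum_le_tsum_norm
            (f := fun i => α i * I (y i) - β i * I (y i)) hfs'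
          simpa [Real.norm_eq_abs] using hnorm
      _ ≤ ∑' i, |α i - β i| := Summable.tsum_le_tsum hf hfs habssummable
  refine hbound1.trans ?_
  rw [hD]
  -- final numeric bound
  have step1 : 2 * E + 2 * t ≤ 2 * (((M:ℝ) - 1) * (N:ℝ)⁻¹) + 2 * ((N:ℝ)⁻¹ * (1 - r)⁻¹) := by
    have h1 : t ≤ (N:ℝ)⁻¹ * (1 - r)⁻¹ :=
      htle.trans (mul_le_mul_of_nonneg_right hrM (by positivity))
    linarith
  refine step1.trans ?_
  have hkey : 2 * ((M:ℝ) - 1) + 2 * (1 - r)⁻¹ ≤ c * L := by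
    have hLd : (1:ℝ) ≤ L / Real.log 2 := (one_le_div h2).mpr hL
    have h3 : 2 + 2 * (1 - r)⁻¹ ≤ (2 + 2 / (1 - r)) * (L / Real.log 2) := by
      have hpos : (0:ℝ) < 2 + 2 / (1 - r) := by positivity
      have h4 := mul_le_mul_of_nonneg_left hLd (le_of_lt hpos)
      rw [mul_one] at h4
      calc 2 + 2 * (1 - r)⁻¹ = 2 + 2 / (1 - r) := by rw [div_eq_mul_inv]
        _ ≤ _ := h4
    have hceq : c * L = 2 * (L / (-Real.log r)) + (2 + 2 / (1 - r)) * (L / Real.log 2) := by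
      rw [hcdef]; ring
    linarith
  calc 2 * (((M:ℝ) - 1) * (N:ℝ)⁻¹) + 2 * ((N:ℝ)⁻¹ * (1 - r)⁻¹)
      = (2 * ((M:ℝ) - 1) + 2 * (1 - r)⁻¹) * (N:ℝ)⁻¹ := by ring
    _ ≤ (c * L) * (N:ℝ)⁻¹ := mul_le_mul_of_nonneg_right hkey (by positivity)
    _ = c * L / N := by rw [div_eq_mul_inv]
end

section
/- Let (r_k)_{k∈ℕ} be a sequence with r_1 = 1, Σ_{k=1}^∞ r_k < ∞, and such that r_i = 0 implies r_j = 0 for all j ≥ i. Suppose there is a constant c_0 so that Σ_{k=M}^∞ r_k ≤ c_0/M for all integers M ≥ 2. Fix d ≥ 1 and a discrete probability measure μ = Σ_{i=1}^∞ α_i δ_{y_i} on [0,1]^d (α_i ≥ 0, Σ_i α_i = 1) whose weights satisfy α_k ≤ r_k α_1 for all k. Let g : [1,∞) → [0,∞) be a continuous strictly decreasing function with Σ_{i=M}^∞ r_i ≤ g(M) for all integers M ≥ 2 and g(s) ≤ c_0/s for all s ∈ [1,∞). Then for every integer N ≥ 2 and every t ∈ [1,∞) with g(t) = 1/(N α_1),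 there exist points x_1, …, x_N ∈ [0,1]^d such that the empirical measure ν_N satisfies ρ(μ; ν_N) < (6c_0 + 3) · t / N. -/
open MeasureTheory Set
open scoped ENNReal

lemma exists_rep {P : Type*} (y : ℕ → P) :
    ∀ (M : ℕ) (n : ℕ → ℕ),
    ∃ x : Fin (∑ i ∈ Finset.range M, n i) → P,
      (∀ j, ∃ i, i < M ∧ x j = y i) ∧
      (∀ F : P → ℝ≥0∞, ∑ j, F (x j) = ∑ i ∈ Finset.range M, (n i : ℝ≥0∞) * F (y i)) := by
  intro M
  induction M with
  | zero =>
    intro n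
    haveI : IsEmpty (Fin (∑ i ∈ Finset.range 0, n i)) := by
      simp only [Finset.range_zero, Finset.sum_empty]; infer_instance
    exact ⟨fun j => y 0, fun j => isEmptyElim j, fun F => by rw [Fintype.sum_empty]; simp⟩
  | succ M ih =>
    intro n
    obtain ⟨x', hmem', hsum'⟩ := ih n
    set c : Fin (n M) → P := fun _ => y M with hc
    refine ⟨(Fin.append x' c) ∘ Fin.cast (Finset.sum_range_succ n M), ?_, ?_⟩
    · intro j
      simp only [Function.comp_apply]
      generalize Fin.cast (Finset.sum_range_succ n M) j = j'
      refine Fin.addCases (fun l => ?_) (fun r => ?_) j'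
      · obtain ⟨i, hi, hxi⟩ := hmem' l
        exact ⟨i, Nat.lt_succ_of_lt hi, by rw [Fin.append_left]; exact hxi⟩
      · exact ⟨M, Nat.lt_succ_self M, by rw [Fin.append_right]⟩
    · intro F
      have h1 : ∑ j, F ((Fin.append x' c ∘ Fin.cast (Finset.sum_range_succ n M)) j)
          = ∑ j' : Fin (∑ i ∈ Finset.range M, n i + n M), F (Fin.append x' c j') := by
        refine Fintype.sum_equiv (finCongr (Finset.sum_range_succ n M)) _ _ (fun j => ?_)
        simp [finCongr_apply]
      rw [h1, Fin.sum_univ_add]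
      simp only [Fin.append_left, Fin.append_right, hsum']
      rw [Finset.sum_range_succ]
      simp [hc, Finset.card_univ, mul_comm]


/-- The total variation distance `ρ(μ;ν) = sup_{A Borel} |μ(A) − ν(A)|`. -/
noncomputable def totalVar {d : ℕ} (μ ν : Measure (Fin d → ℝ)) : ℝ :=
  ⨆ A : {S : Set (Fin d → ℝ) // MeasurableSet S}, |(μ ↑A).toReal - (ν ↑A).toReal|

/-- Here the sequence `r` and the weights `α` are indexed from `0`, so that `r 0, α 0`
play the roles of `r_1, α_1` in the paper; the tail `∑_{k=M}^∞ r_k` (paper indexing)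
is `∑' i, r (M - 1 + i)`.

Let `(r_k)` satisfy `r_1 = 1`, `∑ r_k < ∞`, `r_i = 0 ⟹ r_j = 0 (j ≥ i)`, and
`∑_{k=M}^∞ r_k ≤ c₀/M` for integers `M ≥ 2`. Let `μ = ∑ α_i δ_{y_i}` be a discrete
probability measure on `[0,1]^d` with `α_k ≤ r_k α_1`. Let `g : [1,∞) → [0,∞)` be a
continuous strictly decreasing gauge with `∑_{i=M}^∞ r_i ≤ g(M)` for integers `M ≥ 2`
and `g(s) ≤ c₀/s` on `[1,∞)`. Then for every `N ≥ 2` and every `t ∈ [1,∞)` with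
`g(t) = 1/(N α_1)` there are points `x_1,…,x_N ∈ [0,1]^d` with
`ρ(μ; ν_N) < (6c₀+3) t / N`. -/
theorem stmt4 (r : ℕ → ℝ) (hr1 : r 0 = 1) (hrsum : Summable r)
    (hrzero : ∀ i j : ℕ, r i = 0 → i ≤ j → r j = 0)
    (c₀ : ℝ)
    (htailbound : ∀ M : ℕ, 2 ≤ M → (∑' i : ℕ, r (M - 1 + i)) ≤ c₀ / M)
    (d : ℕ) (hd : 1 ≤ d)
    (α : ℕ → ℝ) (y : ℕ → (Fin d → ℝ))
    (hα : ∀ i, 0 ≤ α i) (hsum : (∑' i, α i) = 1)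
    (hy : ∀ i, y i ∈ Icc (0 : Fin d → ℝ) 1)
    (hdecay : ∀ k : ℕ, α k ≤ r k * α 0)
    (g : ℝ → ℝ)
    (hgcont : ContinuousOn g (Ici 1))
    (hganti : StrictAntiOn g (Ici 1))
    (hgnonneg : ∀ s ∈ Ici (1 : ℝ), 0 ≤ g s)
    (hgtail : ∀ M : ℕ, 2 ≤ M → (∑' i : ℕ, r (M - 1 + i)) ≤ g M)
    (hgsmall : ∀ s ∈ Ici (1 : ℝ), g s ≤ c₀ / s)
    (N : ℕ) (hN : 2 ≤ N)
    (t : ℝ) (ht : t ∈ Ici (1 : ℝ)) (hgt : g t = 1 / (N * α 0)) :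
    ∃ x : Fin N → (Fin d → ℝ),
      (∀ i, x i ∈ Icc (0 : Fin d → ℝ) 1) ∧
      totalVar (discreteMeasure d α y) (empMeasure d N x) < (6 * c₀ + 3) * t / N := by
  classical
  have ht1 : (1:ℝ) ≤ t := ht
  have htpos : (0:ℝ) < t := lt_of_lt_of_le one_pos ht1
  have hNpos : (0:ℝ) < N := by exact_mod_cast Nat.lt_of_lt_of_le Nat.zero_lt_two hN
  have hα0 : 0 < α 0 := by
    rcases lt_or_eq_of_le (hα 0) with h | h
    · exact h
    · exfalso
      have hz : ∀ i, α i = 0 := fun i =>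
        le_antisymm (by have := hdecay i; rw [← h] at this; simpa using this) (hα i)
      rw [tsum_congr hz, tsum_zero] at hsum
      norm_num at hsum
  have hrnn : ∀ k, 0 ≤ r k := fun k =>
    (mul_nonneg_iff_of_pos_right hα0).mp (le_trans (hα k) (hdecay k))
  have hαsum : Summable α :=
    Summable.of_nonneg_of_le hα hdecay (hrsum.mul_right (α 0))
  have hc0 : 0 ≤ c₀ := le_trans (hgnonneg 1 (by norm_num)) (by simpa using hgsmall 1 (by norm_num))
  have hgtpos : 0 < g t := by rw [hgt]; exact div_pos one_pos (mul_pos hNpos hα0)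
  set M := max 2 ⌈t⌉₊ with hMdef
  have hM2 : 2 ≤ M := le_max_left _ _
  have hMt : t ≤ (M:ℝ) := le_trans (Nat.le_ceil t) (Nat.cast_le.mpr (le_max_right _ _))
  -- counts
  set S : ℕ := ∑ j ∈ Finset.Ico 1 M, ⌊(N:ℝ) * α j⌋₊ with hSdef
  have hfloor_le : ∀ j : ℕ, (⌊(N:ℝ) * α j⌋₊ : ℝ) ≤ (N:ℝ) * α j := fun j =>
    Nat.floor_le (mul_nonneg (le_of_lt hNpos) (hα j))
  have hrangeM : ∑ j ∈ Finset.range M, α j = α 0 + ∑ j ∈ Finset.Ico 1 M, α j := by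
    rw [Finset.range_eq_Ico, Finset.sum_eq_sum_Ico_succ_bot (by omega : 0 < M)]
  have hIcoM : ∑ j ∈ Finset.Ico 1 M, α j + ∑' i, α (i + M) = 1 - α 0 := by
    have h := Summable.sum_add_tsum_nat_add (f := α) M hαsum
    rw [hsum, hrangeM] at h
    linarith
  have htail_nonneg : 0 ≤ ∑' i, α (i + M) :=
    tsum_nonneg (fun i => hα _)
  have hIco_le : ∑ j ∈ Finset.Ico 1 M, α j ≤ 1 - α 0 := by
    linarith
  have hSle : S ≤ N := by
    have h1 : (S:ℝ) ≤ (N:ℝ) := by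
      push_cast [hSdef]
      calc ∑ j ∈ Finset.Ico 1 M, (⌊(N:ℝ) * α j⌋₊ : ℝ)
          ≤ ∑ j ∈ Finset.Ico 1 M, (N:ℝ) * α j := Finset.sum_le_sum fun j _ => hfloor_le j
        _ = (N:ℝ) * ∑ j ∈ Finset.Ico 1 M, α j := by rw [Finset.mul_sum]
        _ ≤ (N:ℝ) * 1 := by
            refine mul_le_mul_of_nonneg_left (le_trans hIco_le ?_) (le_of_lt hNpos)
            linarith
        _ = (N:ℝ) := mul_one _
    exact_mod_cast h1
  set n : ℕ → ℕ := fun i => if i = 0 then N - S else ⌊(N:ℝ) * α i⌋₊ with hndef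
  have hnsum : ∑ i ∈ Finset.range M, n i = N := by
    rw [Finset.range_eq_Ico, Finset.sum_eq_sum_Ico_succ_bot (by omega : 0 < M)]
    have h1 : ∑ i ∈ Finset.Ico (0 + 1) M, n i = S := by
      refine Finset.sum_congr rfl (fun i hi => ?_)
      have : i ≠ 0 := by
        simp only [Finset.mem_Ico] at hi; omega
      simp [hndef, this]
    rw [h1]
    simp only [hndef, if_pos rfl]
    omega
  -- construction
  obtain ⟨x₀, hmem₀, hsum₀⟩ := exists_rep y M n
  set x : Fin N → (Fin d → ℝ) := x₀ ∘ Fin.cast hnsum.symm with hxdef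
  refine ⟨x, ?_, ?_⟩
  · intro j
    obtain ⟨i, _, hxi⟩ := hmem₀ (Fin.cast hnsum.symm j)
    rw [hxdef]; simp only [Function.comp_apply, hxi]; exact hy i
  -- quantities
  set T : ℝ := ∑' i, α (i + M) with hTdef
  set E : ℝ := ∑ i ∈ Finset.Ico 1 M, (α i - (n i : ℝ) / N) with hEdef
  have hne0 : ∀ i ∈ Finset.Ico 1 M, i ≠ 0 := by
    intro i hi; simp only [Finset.mem_Ico] at hi; omega
  have hE_term_nonneg : ∀ i ∈ Finset.Ico 1 M, 0 ≤ α i - (n i : ℝ) / N := by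
    intro i hi
    have hni : (n i : ℝ) ≤ (N:ℝ) * α i := by
      simp only [hndef, if_neg (hne0 i hi)]; exact hfloor_le i
    rw [sub_nonneg, div_le_iff₀ hNpos]
    linarith
  have hE_term_lt : ∀ i ∈ Finset.Ico 1 M, α i - (n i : ℝ) / N < 1 / N := by
    intro i hi
    have hni : (N:ℝ) * α i < (n i : ℝ) + 1 := by
      simp only [hndef, if_neg (hne0 i hi)]
      exact Nat.lt_floor_add_one _
    rw [sub_lt_iff_lt_add, ← add_div, lt_div_iff₀ hNpos]
    linarith
  have hE_nonneg : 0 ≤ E := Finset.sum_nonneg hE_term_nonneg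
  have hs1 : Summable (fun i => α (i + M)) := (summable_nat_add_iff M).mpr hαsum
  have hs2 : Summable (fun i => r (M + i)) := by
    refine ((summable_nat_add_iff M).mpr hrsum).congr (fun i => ?_)
    rw [add_comm]
  have hgM1 : (∑' i, r (M + i)) ≤ g ((M + 1 : ℕ) : ℝ) := by
    have h := hgtail (M + 1) (by omega)
    simpa using h
  have hgM1t : g ((M + 1 : ℕ) : ℝ) ≤ g t := by
    refine hganti.antitoneOn ht ?_ ?_
    · simp only [mem_Ici]; push_cast; linarith
    · push_cast; linarith
  have hTN : T ≤ 1 / N := by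
    have hle1 : T ≤ (∑' i, r (M + i)) * α 0 := by
      rw [hTdef, ← tsum_mul_right]
      refine Summable.tsum_le_tsum (fun i => ?_) hs1 (hs2.mul_right (α 0))
      rw [add_comm M i]; exact hdecay (i + M)
    have hle2 : (∑' i, r (M + i)) * α 0 ≤ g t * α 0 :=
      mul_le_mul_of_nonneg_right (le_trans hgM1 hgM1t) (le_of_lt hα0)
    have hle3 : g t * α 0 = 1 / N := by
      rw [hgt]; field_simp
    linarith
  have hclaim : ∀ A : Set (Fin d → ℝ), MeasurableSet A →
      |((discreteMeasure d α y) A).toReal - ((empMeasure d N x) A).toReal| ≤ 2 * E + 2 * T := by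
    intro A hA
    set ind : ℕ → ℝ := fun i => if y i ∈ A then 1 else 0 with hinddef
    have hind_nonneg : ∀ i, 0 ≤ ind i := fun i => by
      rw [hinddef]; dsimp only; split <;> norm_num
    have hind_le_one : ∀ i, ind i ≤ 1 := fun i => by
      rw [hinddef]; dsimp only; split <;> norm_num
    have hαind : Summable (fun i => α i * ind i) :=
      hαsum.of_nonneg_of_le (fun i => mul_nonneg (hα i) (hind_nonneg i))
        (fun i => mul_le_of_le_one_right (hα i) (hind_le_one i))
    -- discrete measure evaluation
    have hμ : ((discreteMeasure d α y) A).toReal = ∑' i, α i * ind i := by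
      have h1 : (discreteMeasure d α y) A
          = ∑' i, ENNReal.ofReal (α i) * Measure.dirac (y i) A := by
        rw [discreteMeasure, Measure.sum_apply _ hA]
        simp only [Measure.smul_apply, smul_eq_mul]
      have h2 : ∀ i, ENNReal.ofReal (α i) * Measure.dirac (y i) A
          = ENNReal.ofReal (α i * ind i) := by
        intro i
        rw [Measure.dirac_apply' _ hA, Set.indicator_apply]
        by_cases h : y i ∈ A <;> simp [hinddef, h]
      rw [h1, tsum_congr h2,
        ← ENNReal.ofReal_tsum_of_nonneg (fun i => mul_nonneg (hα i) (hind_nonneg i)) hαind,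
        ENNReal.toReal_ofReal (tsum_nonneg (fun i => mul_nonneg (hα i) (hind_nonneg i)))]
    -- empirical measure evaluation
    have hν : ((empMeasure d N x) A).toReal
        = (∑ i ∈ Finset.range M, (n i : ℝ) * ind i) / N := by
      have h1 : (empMeasure d N x) A
          = (N : ℝ≥0∞)⁻¹ * ∑ j : Fin N, Measure.dirac (x j) A := by
        rw [empMeasure, Measure.smul_apply, smul_eq_mul,
          Measure.finset_sum_apply]
      have h2 : ∑ j : Fin N, Measure.dirac (x j) A
          = ∑ i ∈ Finset.range M, (n i : ℝ≥0∞) * Measure.dirac (y i) A := by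
        have h2' : ∑ j : Fin N, Measure.dirac (x j) A
            = ∑ j : Fin (∑ i ∈ Finset.range M, n i), Measure.dirac (x₀ j) A := by
          refine Fintype.sum_equiv (finCongr hnsum.symm)
            (fun j => Measure.dirac (x j) A) (fun j => Measure.dirac (x₀ j) A) (fun j => ?_)
          rw [hxdef]
          simp [finCongr_apply]
        exact h2'.trans (hsum₀ fun p => Measure.dirac p A)
      have h3 : ∀ i, Measure.dirac (y i) A = ENNReal.ofReal (ind i) := by
        intro i
        rw [Measure.dirac_apply' _ hA, Set.indicator_apply]
        by_cases h : y i ∈ A <;> simp [hinddef, h]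
      have h4 : ∀ i ∈ Finset.range M, (n i : ℝ≥0∞) * ENNReal.ofReal (ind i) ≠ ⊤ := by
        intro i _
        exact ENNReal.mul_ne_top (ENNReal.natCast_ne_top _) ENNReal.ofReal_ne_top
      rw [h1, h2]
      simp only [h3]
      rw [ENNReal.toReal_mul, ENNReal.toReal_inv, ENNReal.toReal_natCast,
        ENNReal.toReal_sum h4]
      have h5 : ∀ i ∈ Finset.range M,
          ((n i : ℝ≥0∞) * ENNReal.ofReal (ind i)).toReal = (n i : ℝ) * ind i := by
        intro i _
        rw [ENNReal.toReal_mul, ENNReal.toReal_natCast,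
          ENNReal.toReal_ofReal (hind_nonneg i)]
      rw [Finset.sum_congr rfl h5]
      ring
    rw [hμ, hν]
    -- core estimate
    set β : ℕ → ℝ := fun i => if i < M then (n i : ℝ) / N else 0 with hβdef
    have hβnn : ∀ i, 0 ≤ β i := fun i => by
      rw [hβdef]; dsimp only; split <;> positivity
    have hβfin : ∀ i ∉ Finset.range M, β i * ind i = 0 := by
      intro i hi
      rw [Finset.mem_range] at hi
      simp [hβdef, hi]
    have hβsum : Summable (fun i => β i * ind i) :=
      summable_of_ne_finset_zero hβfin
    have hν' : (∑ i ∈ Finset.range M, (n i : ℝ) * ind i) / N = ∑' i, β i * ind i := by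
      rw [tsum_eq_sum hβfin, Finset.sum_div]
      refine Finset.sum_congr rfl (fun i hi => ?_)
      rw [Finset.mem_range] at hi
      simp only [hβdef, if_pos hi]
      ring
    rw [hν', ← Summable.tsum_sub hαind hβsum]
    have hd1 : ∀ i, α i * ind i - β i * ind i = (α i - β i) * ind i := fun i => by ring
    rw [tsum_congr hd1]
    -- summability of |α - β|
    have habs_le : ∀ i, |(α i - β i)| ≤ α i + β i := fun i =>
      abs_sub (α i) (β i) |>.trans (by
        rw [abs_of_nonneg (hα i), abs_of_nonneg (hβnn i)])
    have hβsum' : Summable β := summable_of_ne_finset_zero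
      (s := Finset.range M) (fun i hi => by
        rw [Finset.mem_range] at hi; simp [hβdef, hi])
    have habs_sum : Summable (fun i => |α i - β i|) :=
      Summable.of_nonneg_of_le (fun i => abs_nonneg _) habs_le (hαsum.add hβsum')
    have habs : |∑' i, (α i - β i) * ind i| ≤ ∑' i, |α i - β i| := by
      have h6 : Summable (fun i => ‖(α i - β i) * ind i‖) := by
        refine Summable.of_nonneg_of_le (fun i => norm_nonneg _) (fun i => ?_) habs_sum
        rw [Real.norm_eq_abs, abs_mul]
        exact mul_le_of_le_one_right (abs_nonneg _)
          (by rw [abs_of_nonneg (hind_nonneg i)]; exact hind_le_one i)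
      calc |∑' i, (α i - β i) * ind i| ≤ ∑' i, ‖(α i - β i) * ind i‖ := by
            rw [← Real.norm_eq_abs]; exact norm_tsum_le_tsum_norm h6
        _ ≤ ∑' i, |α i - β i| := by
            refine Summable.tsum_le_tsum (fun i => ?_) h6 habs_sum
            rw [Real.norm_eq_abs, abs_mul]
            exact mul_le_of_le_one_right (abs_nonneg _)
              (by rw [abs_of_nonneg (hind_nonneg i)]; exact hind_le_one i)
    refine le_trans habs ?_
    -- compute ∑' |α - β|
    have hsplit := Summable.sum_add_tsum_nat_add (f := fun i => |α i - β i|) M habs_sum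
    have htail_eq : (∑' i, |α (i + M) - β (i + M)|) = T := by
      rw [hTdef]
      refine tsum_congr (fun i => ?_)
      have : ¬ (i + M < M) := by omega
      rw [hβdef]
      simp only [this, if_false]
      rw [sub_zero]
      exact abs_of_nonneg (hα _)
    -- the head sum
    have hSreal : ∑ i ∈ Finset.Ico 1 M, (n i : ℝ) = (S : ℝ) := by
      rw [hSdef]
      push_cast
      refine Finset.sum_congr rfl (fun i hi => ?_)
      rw [hndef]
      simp [hne0 i hi]
    have hEeq : E = ∑ i ∈ Finset.Ico 1 M, α i - (S : ℝ) / N := by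
      rw [hEdef, Finset.sum_sub_distrib, ← Finset.sum_div, hSreal]
    have hβ0 : β 0 = 1 - (S : ℝ) / N := by
      rw [hβdef]
      simp only [if_pos (by omega : 0 < M), hndef, if_pos rfl]
      rw [Nat.cast_sub hSle]
      field_simp
    have hβ0α : β 0 - α 0 = E + T := by
      rw [hβ0, hEeq]
      have := hIcoM
      linarith
    have hhead : ∑ i ∈ Finset.range M, |α i - β i|
        = (E + T) + E := by
      rw [Finset.range_eq_Ico, Finset.sum_eq_sum_Ico_succ_bot (by omega : 0 < M)]
      have hterm : ∀ i ∈ Finset.Ico (0 + 1) M, |α i - β i| = α i - (n i : ℝ) / N := by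
        intro i hi
        have hiM : i < M := (Finset.mem_Ico.mp hi).2
        rw [hβdef]
        simp only [if_pos hiM]
        exact abs_of_nonneg (hE_term_nonneg i hi)
      rw [Finset.sum_congr rfl hterm, ← hEdef, abs_sub_comm, abs_of_nonneg (by linarith : 0 ≤ β 0 - α 0), hβ0α]
    have : (∑' i, |α i - β i|) = (E + T) + E + T := by
      rw [← hsplit, hhead, htail_eq]
    rw [this]
    linarith
  have hsup : totalVar (discreteMeasure d α y) (empMeasure d N x) ≤ 2 * E + 2 * T := by
    refine Real.iSup_le (fun A => hclaim A.1 A.2) (by positivity)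
  have hfinal : 2 * E + 2 * T < (6 * c₀ + 3) * t / N := by
    rcases le_or_gt t 2 with h2 | h2
    · -- small t : M = 2, use 1 - α 0 ≤ 1/N
      have h1α : 1 - α 0 ≤ 1 / N := by
        have hshift := Summable.sum_add_tsum_nat_add (f := α) 1 hαsum
        rw [hsum] at hshift
        simp only [Finset.sum_range_one] at hshift
        have hs1' : Summable (fun i => α (i + 1)) := (summable_nat_add_iff 1).mpr hαsum
        have hs2' : Summable (fun i => r (1 + i)) := by
          refine ((summable_nat_add_iff 1).mpr hrsum).congr (fun i => ?_)
          rw [add_comm]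
        have hle1 : (∑' i, α (i + 1)) ≤ (∑' i, r (1 + i)) * α 0 := by
          rw [← tsum_mul_right]
          refine Summable.tsum_le_tsum (fun i => ?_) hs1' (hs2'.mul_right (α 0))
          rw [add_comm 1 i]; exact hdecay (i + 1)
        have hg2 : (∑' i, r (1 + i)) ≤ g ((2 : ℕ) : ℝ) := by
          have h := hgtail 2 le_rfl
          simpa using h
        have hg2t : g ((2 : ℕ) : ℝ) ≤ g t := by
          refine hganti.antitoneOn ht ?_ ?_
          · simp only [mem_Ici]; norm_num
          · push_cast; linarith
        have : (∑' i, α (i + 1)) ≤ g t * α 0 := by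
          calc (∑' i, α (i + 1)) ≤ (∑' i, r (1 + i)) * α 0 := hle1
            _ ≤ g t * α 0 := mul_le_mul_of_nonneg_right (le_trans hg2 hg2t) (le_of_lt hα0)
        have hgtα : g t * α 0 = 1 / N := by rw [hgt]; field_simp
        linarith
      have hE_le : E ≤ ∑ i ∈ Finset.Ico 1 M, α i := by
        refine Finset.sum_le_sum (fun i hi => ?_)
        have : (0:ℝ) ≤ (n i : ℝ) / N := by positivity
        linarith
      have hET : E + T ≤ 1 / N := by linarith
      have h6 : 0 ≤ 6 * (c₀ * t) := by
        have := mul_nonneg hc0 (le_of_lt htpos); linarith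
      have h3 : (2:ℝ) < (6 * c₀ + 3) * t := by linarith
      have h4 : 2 / (N:ℝ) < (6 * c₀ + 3) * t / N := (div_lt_div_iff_of_pos_right hNpos).mpr h3
      have h2N : 2 / (N:ℝ) = 2 * (1 / N) := by ring
      linarith
    · -- large t : M = ⌈t⌉₊
      have hMceil : M = ⌈t⌉₊ := by
        rw [hMdef]
        exact max_eq_right (Nat.lt_ceil.mpr (by push_cast; linarith) : 1 < ⌈t⌉₊)
      have hMlt : (M:ℝ) < t + 1 := by
        rw [hMceil]; exact Nat.ceil_lt_add_one (by linarith)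
      have hne : (Finset.Ico 1 M).Nonempty := by
        rw [Finset.nonempty_Ico]; omega
      have hElt : E < ((M:ℝ) - 1) / N := by
        have h := Finset.sum_lt_sum_of_nonempty hne hE_term_lt
        rw [Finset.sum_const, Nat.card_Ico, nsmul_eq_mul] at h
        have hcast : ((M - 1 : ℕ) : ℝ) = (M:ℝ) - 1 := by
          have : 1 ≤ M := by omega
          push_cast [this]; ring
        rw [hcast] at h
        calc E < ((M:ℝ) - 1) * (1 / N) := h
          _ = ((M:ℝ) - 1) / N := by ring
      have h6 : 0 ≤ 6 * (c₀ * t) := by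
        have := mul_nonneg hc0 (le_of_lt htpos); linarith
      have hnum : 2 * (M:ℝ) < (6 * c₀ + 3) * t := by linarith
      have h4 : (2 * (M:ℝ)) / N < (6 * c₀ + 3) * t / N := (div_lt_div_iff_of_pos_right hNpos).mpr hnum
      have heq : 2 * (((M:ℝ) - 1) / N) + 2 * (1 / N) = (2 * (M:ℝ)) / N := by
        field_simp; ring
      linarith
  exact lt_of_le_of_lt hsup hfinal
end

section
/- Fix 0 < r < 1 and set c_0 = −1/(e · ln(r) · (1−r)) and c̃_r = (log(2) − log(1−r)) / (−log(r) · log(2)), and let c_r = (6c_0 + 3)·c̃_r. Then for every d ≥ 1, every integer N ≥ 2, and every probability measure μ on [0,1]^d of the form μ = Σ_{i=1}^∞ α_i δ_{y_i} with α_i ≥ 0, Σ_i α_i = 1, and α_i ≤ r^{i−1} α_1 for all i, there exist points x_1, …, x_N ∈ [0,1]^d such that the empirical measure ν_N satisfies ρ(μ; ν_N) ≤ c_r · log(N)/N. -/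
open MeasureTheory Set
open scoped ENNReal

lemma exists_points {β : Type*} (c : ℕ → ℕ) (y : ℕ → β) :
    ∀ (M N : ℕ), (∑ i ∈ Finset.range M, c i = N) →
    ∃ x : Fin N → β, (∀ j, ∃ i, i < M ∧ x j = y i) ∧
      ∀ f : β → ℝ, ∑ j : Fin N, f (x j) = ∑ i ∈ Finset.range M, (c i : ℝ) * f (y i) := by
  intro M
  induction M with
  | zero =>
      intro N hN
      simp at hN
      subst hN
      exact ⟨Fin.elim0, fun j => j.elim0, fun f => by simp⟩
  | succ M ih =>
      intro N hN
      rw [Finset.sum_range_succ] at hN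
      obtain ⟨x', h1, h2⟩ := ih (∑ i ∈ Finset.range M, c i) rfl
      refine ⟨fun j => Fin.append x' (fun _ => y M) (Fin.cast hN.symm j), ?_, ?_⟩
      · intro j
        refine Fin.addCases (motive := fun jj => ∃ i, i < M + 1 ∧
          Fin.append x' (fun _ => y M) jj = y i) ?_ ?_ (Fin.cast hN.symm j)
        · intro i
          obtain ⟨k, hk, hxk⟩ := h1 i
          exact ⟨k, Nat.lt_succ_of_lt hk, by simpa [Fin.append_left] using hxk⟩
        · intro i
          exact ⟨M, Nat.lt_succ_self M, by simp [Fin.append_right]⟩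
      · intro f
        have e1 : ∑ j : Fin N, f (Fin.append x' (fun _ => y M) (Fin.cast hN.symm j))
            = ∑ j : Fin ((∑ i ∈ Finset.range M, c i) + c M), f (Fin.append x' (fun _ => y M) j) := by
          apply Finset.sum_equiv (finCongr hN.symm) (by simp)
          intro i _
          rfl
        rw [e1, Fin.sum_univ_add]
        simp only [Fin.append_left, Fin.append_right]
        rw [h2 f, Finset.sum_range_succ]
        simp [mul_comm]

lemma sq_exp_neg_le (s : ℝ) (hs : 0 ≤ s) : s ^ 2 * Real.exp (-s) ≤ 4 * Real.exp (-2) := by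
  have h := Real.add_one_le_exp ((s - 2) / 2)
  have h2 : s / 2 ≤ Real.exp ((s - 2) / 2) := by linarith
  have h3 : (s / 2) ^ 2 ≤ Real.exp ((s - 2) / 2) ^ 2 :=
    pow_le_pow_left₀ (by linarith) h2 2
  have h4 : Real.exp ((s - 2) / 2) ^ 2 = Real.exp (s - 2) := by
    rw [sq, ← Real.exp_add]; ring_nf
  have h5 : s ^ 2 ≤ 4 * Real.exp (s - 2) := by rw [← h4]; nlinarith [h3]
  have h6 : Real.exp (s - 2) * Real.exp (-s) = Real.exp (-2) := by
    rw [← Real.exp_add]; ring_nf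
  nlinarith [Real.exp_pos (-s), h5, h6]


set_option maxHeartbeats 1000000 in
lemma keyIneq (r : ℝ) (hr0 : 0 < r) (hr1 : r < 1) (N : ℕ) (hN : 2 ≤ N)
    (s : ℝ) (hs : s = -Real.log r) (K : ℕ) (hK : K = ⌊Real.log N / s⌋₊) :
    (K : ℝ) + (N : ℝ) * r ^ (K + 1) / (1 - r) ≤
      (3 + 6 / (Real.exp 1 * s * (1 - r))) / s * Real.log N := by
  have hlogr : Real.log r < 0 := Real.log_neg hr0 hr1
  have hs0 : 0 < s := by rw [hs]; linarith
  have h1r : 0 < 1 - r := by linarith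
  have he : (0:ℝ) < Real.exp 1 := Real.exp_pos 1
  have hN0 : (0:ℝ) < N := by positivity
  have hN2 : (2:ℝ) ≤ (N:ℝ) := by exact_mod_cast hN
  set L := Real.log N with hL
  have hL2 : Real.log 2 ≤ L := Real.log_le_log (by norm_num) hN2
  have hlog2 : 0.6931471803 < Real.log 2 := Real.log_two_gt_d9
  have hL0 : 0 < L := by linarith
  have hrs : r = Real.exp (-s) := by rw [hs, neg_neg, Real.exp_log hr0]
  have hNL : (N : ℝ) = Real.exp L := (Real.exp_log hN0).symm
  have hE : (N : ℝ) * r ^ (K + 1) = Real.exp (L - s * (K + 1)) := by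
    rw [hNL, hrs, ← Real.exp_nat_mul, ← Real.exp_add]
    congr 1
    push_cast
    ring
  have hKle : (K : ℝ) ≤ L / s := by
    rw [hK]; exact Nat.floor_le (by positivity)
  have hKgt : L / s < (K : ℝ) + 1 := by
    rw [hK]; push_cast; exact Nat.lt_floor_add_one _
  have hLsK : L < s * ((K : ℝ) + 1) := by
    rw [div_lt_iff₀ hs0] at hKgt; linarith
  have key2 : Real.exp (L - s * (K + 1)) ≤ 2 * (1 - r) * (L / s) + 6 * L / (Real.exp 1 * s ^ 2) := by
    have hEle1 : Real.exp (L - s * ((K:ℝ) + 1)) ≤ 1 := by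
      apply Real.exp_le_one_iff.mpr; linarith
    rcases Nat.eq_zero_or_pos K with hK0 | hK1
    · -- K = 0 : L < s, use convexity of exp
      subst hK0
      have hLs : L < s := by push_cast at hLsK; linarith
      have hs2 : Real.log 2 < s := lt_of_le_of_lt hL2 hLs
      have hden : 0 < s - Real.log 2 := by linarith
      set θ : ℝ := (s - L) / (s - Real.log 2) with hθ
      have hθ0 : 0 ≤ θ := div_nonneg (by linarith) (by linarith)
      have hθ1 : 0 ≤ 1 - θ := by
        rw [hθ, sub_nonneg, div_le_one hden]; linarith
      have hcomb : L = θ * Real.log 2 + (1 - θ) * s := by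
        have hθm : θ * (s - Real.log 2) = s - L := by
          rw [hθ]; exact div_mul_cancel₀ _ hden.ne'
        linear_combination hθm
      have hexp2 : Real.exp (Real.log 2) = 2 := Real.exp_log (by norm_num)
      have hconv : Real.exp L ≤ θ * 2 + (1 - θ) * Real.exp s := by
        have h := convexOn_exp.2 (Set.mem_univ (Real.log 2)) (Set.mem_univ s)
          hθ0 hθ1 (by ring)
        simp only [smul_eq_mul, hexp2] at h
        rw [← hcomb] at h
        exact h
      have hEeq : Real.exp (L - s * ((0:ℕ) + 1)) = Real.exp L * Real.exp (-s) := by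
        rw [← Real.exp_add]; push_cast; ring_nf
      have hr2 : r < 1/2 := by
        have h := Real.exp_lt_exp.mpr (show -s < -Real.log 2 by linarith)
        have h2 : Real.exp (-Real.log 2) = 1/2 := by
          rw [Real.exp_neg, hexp2]; norm_num
        rw [hrs, ← h2]; exact h
      have hend2 : s ≤ 2 * (1 - r) * s + 6 / Real.exp 1 := by
        have q1 : 0 ≤ s * (1 - 2*r) := mul_nonneg hs0.le (by linarith)
        have q2 : 0 < 6 / Real.exp 1 := by positivity
        nlinarith
      have hend1 : 2 * s * Real.exp (-s) ≤ 2 * (1 - r) * Real.log 2 + 6 * Real.log 2 / (Real.exp 1 * s) := by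
        have hsq := sq_exp_neg_le s hs0.le
        have hegt : 2.7182818283 < Real.exp 1 := Real.exp_one_gt_d9
        have hnum : 4 * Real.exp (-2) ≤ 3 * Real.log 2 / Real.exp 1 := by
          have he2 : Real.exp (-2:ℝ) * (Real.exp 1) ^ 2 = 1 := by
            rw [sq, ← Real.exp_add, ← Real.exp_add]; norm_num
          rw [le_div_iff₀ he]
          nlinarith [he2, hegt, hlog2, he]
        have h7 : s ^ 2 * Real.exp (-s) ≤ 3 * Real.log 2 / Real.exp 1 := le_trans hsq hnum
        have h7' : s ^ 2 * Real.exp (-s) * Real.exp 1 ≤ 3 * Real.log 2 := by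
          rw [le_div_iff₀ he] at h7; exact h7
        have h8 : 2 * s * Real.exp (-s) ≤ 6 * Real.log 2 / (Real.exp 1 * s) := by
          rw [le_div_iff₀ (by positivity)]
          nlinarith [h7', hs0, Real.exp_pos (-s), he]
        have h9 : 0 ≤ 2 * (1 - r) * Real.log 2 :=
          mul_nonneg (by linarith) (by linarith)
        linarith
      have hinv : Real.exp (-s) * Real.exp s = 1 := by
        rw [← Real.exp_add]; simp
      have hlin : 2 * (1 - r) * (L / s) + 6 * L / (Real.exp 1 * s ^ 2)
          = θ * ((2 * (1 - r) * Real.log 2 + 6 * Real.log 2 / (Real.exp 1 * s)) / s)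
            + (1 - θ) * ((2 * (1 - r) * s + 6 / Real.exp 1) / s) := by
        rw [hcomb]; field_simp
      rw [hEeq, hlin]
      have hstep : Real.exp L * Real.exp (-s) ≤ θ * (2 * Real.exp (-s)) + (1 - θ) * 1 := by
        calc Real.exp L * Real.exp (-s) = Real.exp (-s) * Real.exp L := by ring
        _ ≤ Real.exp (-s) * (θ * 2 + (1 - θ) * Real.exp s) :=
            mul_le_mul_of_nonneg_left hconv (Real.exp_pos (-s)).le
        _ = θ * (2 * Real.exp (-s)) + (1 - θ) * (Real.exp (-s) * Real.exp s) := by ring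
        _ = θ * (2 * Real.exp (-s)) + (1 - θ) * 1 := by rw [hinv]
      refine le_trans hstep (add_le_add ?_ ?_)
      · apply mul_le_mul_of_nonneg_left _ hθ0
        rw [le_div_iff₀ hs0]
        nlinarith [hend1]
      · apply mul_le_mul_of_nonneg_left _ hθ1
        rw [le_div_iff₀ hs0]
        nlinarith [hend2]
    · -- K ≥ 1 : L/s ≥ 1
      have hP1 : 1 ≤ L / s := by
        have : (1:ℝ) ≤ (K:ℝ) := by exact_mod_cast hK1
        linarith
      have hLge : s ≤ L := by rw [le_div_iff₀ hs0] at hP1; linarith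
      refine le_trans (by exact_mod_cast hEle1) ?_
      rcases le_or_gt 1 s with hs1 | hs1
      · have hre : r ≤ Real.exp (-1) := by
          rw [hrs]; exact Real.exp_le_exp.mpr (by linarith)
        have hre2 : Real.exp (-1:ℝ) ≤ 1/2 := by
          rw [Real.exp_neg]
          rw [inv_le_comm₀ (Real.exp_pos 1) (by norm_num)]
          have := Real.exp_one_gt_d9; linarith
        have h1 : 1 ≤ 2 * (1 - r) * (L / s) := by nlinarith
        have h2 : 0 ≤ 6 * L / (Real.exp 1 * s ^ 2) := by positivity
        linarith
      · have h2 : 2 ≤ 6 * L / (Real.exp 1 * s ^ 2) := by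
          rw [le_div_iff₀ (by positivity)]
          have helt : Real.exp 1 < 2.7182818286 := Real.exp_one_lt_d9
          nlinarith [hLge, hs0]
        have h1 : 0 ≤ 2 * (1 - r) * (L / s) := by positivity
        linarith
  have hdiv : Real.exp (L - s * (K + 1)) / (1 - r)
      ≤ 2 * (L / s) + 6 * L / (Real.exp 1 * s ^ 2 * (1 - r)) := by
    rw [div_le_iff₀ h1r]
    have heq : (2 * (L / s) + 6 * L / (Real.exp 1 * s ^ 2 * (1 - r))) * (1 - r)
        = 2 * (1 - r) * (L / s) + 6 * L / (Real.exp 1 * s ^ 2) := by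
      field_simp
    rw [heq]; exact key2
  have hgoal : (3 + 6 / (Real.exp 1 * s * (1 - r))) / s * L
      = 3 * (L / s) + (2 * (L / s) + 6 * L / (Real.exp 1 * s ^ 2 * (1 - r))) - 2 * (L / s) := by
    field_simp; ring
  rw [hE, hgoal]
  linarith [hdiv, hKle]



set_option maxHeartbeats 1000000 in
/-- With the explicit constants `c₀ = −1/(e ln r (1−r))`,
`c̃_r = (log 2 − log(1−r))/(−log r · log 2)` and `c_r = (6c₀+3) c̃_r`:
for every `d ≥ 1`, `N ≥ 2` and every discrete probability measure
`μ = ∑ α_i δ_{y_i}` on `[0,1]^d` with `α_i ≤ r^(i−1) α_1`, there are points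
`x_1, …, x_N ∈ [0,1]^d` with `ρ(μ; ν_N) ≤ c_r log N / N` (total variation,
stated over every Borel set). -/
theorem stmt5 (r : ℝ) (hr0 : 0 < r) (hr1 : r < 1)
    (c₀ : ℝ) (hc₀ : c₀ = -1 / (Real.exp 1 * Real.log r * (1 - r)))
    (ctil : ℝ) (hctil : ctil = (Real.log 2 - Real.log (1 - r)) / (-Real.log r * Real.log 2))
    (cr : ℝ) (hcr : cr = (6 * c₀ + 3) * ctil) :
    ∀ (d : ℕ), 1 ≤ d →
    ∀ (N : ℕ), 2 ≤ N →
    ∀ (α : ℕ → ℝ) (y : ℕ → (Fin d → ℝ)),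
      (∀ i, 0 ≤ α i) →
      (∑' i, α i) = 1 →
      (∀ i, y i ∈ Icc (0 : Fin d → ℝ) 1) →
      (∀ i : ℕ, α i ≤ r ^ i * α 0) →
      ∃ x : Fin N → (Fin d → ℝ),
        (∀ i, x i ∈ Icc (0 : Fin d → ℝ) 1) ∧
        ∀ A : Set (Fin d → ℝ), MeasurableSet A →
          |((discreteMeasure d α y) A).toReal - ((empMeasure d N x) A).toReal| ≤
            cr * Real.log N / N := by
  intro d hd N hN α y hα0 hαsum hy hαr
  have hN0 : (0:ℝ) < N := by positivity
  have hN2 : (2:ℝ) ≤ (N:ℝ) := by exact_mod_cast hN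
  have hN0' : (0:ℝ) < N := by linarith
  have h1r : 0 < 1 - r := by linarith
  have hlogr : Real.log r < 0 := Real.log_neg hr0 hr1
  have he : (0:ℝ) < Real.exp 1 := Real.exp_pos 1
  -- summability of α
  have Sα : Summable α := by
    by_contra h
    rw [tsum_eq_zero_of_not_summable h] at hαsum
    norm_num at hαsum
  have hα1 : α 0 ≤ 1 := by
    have := Summable.le_tsum Sα 0 (fun j _ => hα0 j)
    rw [hαsum] at this
    exact this
  have hαpow : ∀ i, α i ≤ r ^ i := fun i =>
    le_trans (hαr i) (mul_le_of_le_one_right (pow_nonneg hr0.le i) hα1)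
  have Sα1 : Summable (fun i => α (i + 1)) := (summable_nat_add_iff 1).mpr Sα
  have hsum1 : ∑' i, α (i + 1) = 1 - α 0 := by
    have h := Summable.tsum_eq_zero_add Sα
    rw [hαsum] at h
    linarith
  -- the constants
  set s : ℝ := -Real.log r with hsdef
  have hs0 : 0 < s := by simp only [hsdef]; linarith
  set K : ℕ := ⌊Real.log N / s⌋₊ with hKdef
  -- the counts
  set Sc : ℕ := ∑ j ∈ Finset.range K, ⌊(N:ℝ) * α (j + 1)⌋₊ with hScdef
  set c : ℕ → ℕ := fun i =>
    if i = 0 then N - Sc else if i ≤ K then ⌊(N:ℝ) * α i⌋₊ else 0 with hcdef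
  -- Sc ≤ N
  have hsumK : ∑ j ∈ Finset.range K, α (j + 1) ≤ 1 - α 0 := by
    rw [← hsum1]
    exact Summable.sum_le_tsum _ (fun i _ => hα0 _) Sα1
  have hScleR : (Sc : ℝ) ≤ N := by
    rw [hScdef]
    push_cast
    calc ∑ j ∈ Finset.range K, ((⌊(N:ℝ) * α (j + 1)⌋₊ : ℝ))
        ≤ ∑ j ∈ Finset.range K, (N:ℝ) * α (j + 1) :=
          Finset.sum_le_sum (fun j _ => Nat.floor_le (mul_nonneg hN0.le (hα0 _)))
      _ = (N:ℝ) * ∑ j ∈ Finset.range K, α (j + 1) := by rw [Finset.mul_sum]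
      _ ≤ (N:ℝ) * (1 - α 0) := by
          apply mul_le_mul_of_nonneg_left hsumK hN0.le
      _ ≤ (N:ℝ) * 1 := by
          apply mul_le_mul_of_nonneg_left (by linarith [hα0 0]) hN0.le
      _ = N := by ring
  have hScN : Sc ≤ N := by exact_mod_cast hScleR
  have hctotal : ∑ i ∈ Finset.range (K + 1), c i = N := by
    rw [Finset.sum_range_succ']
    have h1 : ∀ j ∈ Finset.range K, c (j + 1) = ⌊(N:ℝ) * α (j + 1)⌋₊ := by
      intro j hj
      rw [Finset.mem_range] at hj
      simp only [hcdef]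
      rw [if_neg (Nat.succ_ne_zero j), if_pos (by omega)]
    rw [Finset.sum_congr rfl h1]
    have h2 : c 0 = N - Sc := by simp [hcdef]
    rw [h2, ← hScdef]
    omega
  obtain ⟨x, hxmem, hxsum⟩ := exists_points c y (K + 1) N hctotal
  refine ⟨x, ?_, ?_⟩
  · intro j
    obtain ⟨i, _, hxj⟩ := hxmem j
    rw [hxj]; exact hy i
  intro A hA
  -- χ i = indicator
  set χ : ℕ → ℝ := fun i => A.indicator (fun _ => (1:ℝ)) (y i) with hχdef
  have hχ0 : ∀ i, 0 ≤ χ i := fun i => Set.indicator_nonneg (fun _ _ => zero_le_one) _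
  have hχ1 : ∀ i, χ i ≤ 1 := by
    intro i
    simp only [hχdef]
    by_cases h : y i ∈ A
    · rw [Set.indicator_of_mem h]
    · rw [Set.indicator_of_notMem h]; norm_num
  -- μ side
  have Sαχ : Summable (fun i => α i * χ i) := by
    apply Summable.of_nonneg_of_le (fun i => mul_nonneg (hα0 i) (hχ0 i))
      (fun i => mul_le_of_le_one_right (hα0 i) (hχ1 i)) Sα
  have hμ : ((discreteMeasure d α y) A).toReal = ∑' i, α i * χ i := by
    rw [discreteMeasure, Measure.sum_apply _ hA]
    have heach : ∀ i : ℕ, (ENNReal.ofReal (α i) • Measure.dirac (y i)) A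
        = ENNReal.ofReal (α i * χ i) := by
      intro i
      rw [Measure.smul_apply, smul_eq_mul, Measure.dirac_apply' _ hA]
      by_cases h : y i ∈ A
      · simp [hχdef, Set.indicator_of_mem h]
      · simp [hχdef, Set.indicator_of_notMem h]
    rw [tsum_congr heach, ← ENNReal.ofReal_tsum_of_nonneg
      (fun i => mul_nonneg (hα0 i) (hχ0 i)) Sαχ]
    exact ENNReal.toReal_ofReal (tsum_nonneg (fun i => mul_nonneg (hα0 i) (hχ0 i)))
  -- ν side
  have hν : ((empMeasure d N x) A).toReal
      = (∑ i ∈ Finset.range (K + 1), (c i : ℝ) * χ i) / N := by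
    rw [empMeasure, Measure.smul_apply, Measure.finset_sum_apply, smul_eq_mul,
      ENNReal.toReal_mul]
    rw [ENNReal.toReal_sum (fun j _ => measure_ne_top _ _)]
    have heach : ∀ j : Fin N, ((Measure.dirac (x j)) A).toReal
        = A.indicator (fun _ => (1:ℝ)) (x j) := by
      intro j
      rw [Measure.dirac_apply' _ hA]
      by_cases h : x j ∈ A
      · simp [Set.indicator_of_mem h]
      · simp [Set.indicator_of_notMem h]
    rw [Finset.sum_congr rfl (fun j _ => heach j)]
    rw [hxsum (A.indicator (fun _ => (1:ℝ)))]
    have hh : (↑N : ℝ≥0∞)⁻¹.toReal = (N:ℝ)⁻¹ := by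
      simp
    rw [hh, inv_mul_eq_div]
  -- rewrite ν as a tsum
  set β : ℕ → ℝ := fun i => (c i : ℝ) / N with hβdef
  have hβfin : ∀ i ∉ Finset.range (K + 1), β i * χ i = 0 := by
    intro i hi
    rw [Finset.mem_range] at hi
    have : c i = 0 := by
      simp only [hcdef]
      rw [if_neg (by omega), if_neg (by omega)]
    simp [hβdef, this]
  have Sβχ : Summable (fun i => β i * χ i) := summable_of_ne_finset_zero hβfin
  have hνt : ((empMeasure d N x) A).toReal = ∑' i, β i * χ i := by
    rw [hν, tsum_eq_sum hβfin, Finset.sum_div]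
    apply Finset.sum_congr rfl
    intro i _
    simp only [hβdef]
    ring
  -- the difference
  set G : ℕ → ℝ := fun i => (α i - β i) * χ i with hGdef
  have SG : Summable G := by
    have := Sαχ.sub Sβχ
    apply this.congr
    intro i
    simp only [hGdef]
    ring
  have hD : ((discreteMeasure d α y) A).toReal - ((empMeasure d N x) A).toReal = ∑' i, G i := by
    rw [hμ, hνt, ← Summable.tsum_sub Sαχ Sβχ]
    apply tsum_congr
    intro i
    simp only [hGdef]
    ring
  -- properties of g i = α i - β i for i ≥ 1
  have hc1 : ∀ j : ℕ, j + 1 ≤ K → c (j + 1) = ⌊(N:ℝ) * α (j + 1)⌋₊ := by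
    intro j hj
    simp only [hcdef]
    rw [if_neg (Nat.succ_ne_zero j), if_pos hj]
  have hc2 : ∀ j : ℕ, K < j + 1 → c (j + 1) = 0 := by
    intro j hj
    simp only [hcdef]
    rw [if_neg (Nat.succ_ne_zero j), if_neg (by omega)]
  have hg0 : ∀ j : ℕ, 0 ≤ α (j + 1) - β (j + 1) := by
    intro j
    rcases le_or_gt (j + 1) K with h | h
    · have hfl : ((⌊(N:ℝ) * α (j + 1)⌋₊ : ℝ)) ≤ (N:ℝ) * α (j + 1) :=
        Nat.floor_le (mul_nonneg hN0.le (hα0 _))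
      simp only [hβdef, hc1 j h]
      rw [sub_nonneg, div_le_iff₀ hN0]
      linarith
    · simp only [hβdef, hc2 j h]
      simp [hα0 (j + 1)]
  have hgle : ∀ j : ℕ, j < K → α (j + 1) - β (j + 1) ≤ 1 / N := by
    intro j hj
    have hfl : (N:ℝ) * α (j + 1) < (⌊(N:ℝ) * α (j + 1)⌋₊ : ℝ) + 1 :=
      Nat.lt_floor_add_one _
    simp only [hβdef, hc1 j (by omega)]
    rw [sub_le_iff_le_add, ← add_div, le_div_iff₀ hN0]
    linarith [mul_comm (α (j + 1)) (N:ℝ)]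
  have hgtail : ∀ i : ℕ, α (i + K + 1) - β (i + K + 1) ≤ r ^ (K + 1) * r ^ i := by
    intro i
    have h1 : K < (i + K) + 1 := by omega
    have : β (i + K + 1) = 0 := by
      simp only [hβdef]
      rw [show i + K + 1 = (i + K) + 1 from rfl, hc2 (i + K) h1]
      simp
    rw [this, sub_zero]
    calc α (i + K + 1) ≤ r ^ (i + K + 1) := hαpow _
      _ = r ^ (K + 1) * r ^ i := by ring
  -- summability of g (·+1)
  have Sβ1 : Summable (fun j => β (j + 1)) := by
    apply summable_of_ne_finset_zero (s := Finset.range K)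
    intro j hj
    rw [Finset.mem_range] at hj
    simp only [hβdef]
    rw [hc2 j (by omega)]
    simp
  have Sg1 : Summable (fun j => α (j + 1) - β (j + 1)) := Sα1.sub Sβ1
  set T : ℝ := ∑' j, (α (j + 1) - β (j + 1)) with hTdef
  have hT0 : 0 ≤ T := tsum_nonneg hg0
  -- the crucial identity : α 0 - β 0 = -T
  have hβ0 : β 0 = 1 - (Sc : ℝ) / N := by
    have hc0 : c 0 = N - Sc := by simp [hcdef]
    simp only [hβdef]
    rw [hc0, Nat.cast_sub hScN]
    field_simp
  have hβsum1 : ∑' j, β (j + 1) = (Sc : ℝ) / N := by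
    rw [tsum_eq_sum (s := Finset.range K) ?_]
    · rw [hScdef]
      push_cast
      rw [Finset.sum_div]
      apply Finset.sum_congr rfl
      intro j hj
      rw [Finset.mem_range] at hj
      simp only [hβdef, hc1 j (by omega)]
    · intro j hj
      rw [Finset.mem_range] at hj
      simp only [hβdef]
      rw [hc2 j (by omega)]
      simp
  have hkey : α 0 - β 0 = -T := by
    rw [hTdef, Summable.tsum_sub Sα1 Sβ1, hsum1, hβsum1, hβ0]
    ring
  -- bound |∑' G| ≤ T
  have SG1 : Summable (fun j => G (j + 1)) := (summable_nat_add_iff 1).mpr SG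
  have hGsplit : ∑' i, G i = G 0 + ∑' j, G (j + 1) := Summable.tsum_eq_zero_add SG
  have hup : ∑' j, G (j + 1) ≤ T := by
    apply Summable.tsum_le_tsum _ SG1 Sg1
    intro j
    simp only [hGdef]
    exact mul_le_of_le_one_right (hg0 j) (hχ1 (j + 1))
  have hlow : 0 ≤ ∑' j, G (j + 1) :=
    tsum_nonneg (fun j => mul_nonneg (hg0 j) (hχ0 (j + 1)))
  have hG0up : G 0 ≤ 0 := by
    simp only [hGdef, hkey]
    exact mul_nonpos_of_nonpos_of_nonneg (by linarith) (hχ0 0)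
  have hG0low : -T ≤ G 0 := by
    simp only [hGdef, hkey]
    have : T * χ 0 ≤ T * 1 := mul_le_mul_of_nonneg_left (hχ1 0) hT0
    nlinarith [hχ0 0]
  have habs : |∑' i, G i| ≤ T := by
    rw [hGsplit, abs_le]
    constructor <;> linarith
  -- bound T
  have hTb : T ≤ (K : ℝ) / N + r ^ (K + 1) / (1 - r) := by
    have hsplit := (Summable.sum_add_tsum_nat_add (f := fun j => α (j + 1) - β (j + 1)) K Sg1).symm
    rw [hTdef, hsplit]
    have hb1 : ∑ j ∈ Finset.range K, (α (j + 1) - β (j + 1)) ≤ (K : ℝ) / N := by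
      calc ∑ j ∈ Finset.range K, (α (j + 1) - β (j + 1))
          ≤ ∑ j ∈ Finset.range K, (1 / (N:ℝ)) :=
            Finset.sum_le_sum (fun j hj => hgle j (Finset.mem_range.mp hj))
        _ = (K : ℝ) / N := by
            rw [Finset.sum_const, Finset.card_range, nsmul_eq_mul]
            ring
    have hb2 : ∑' i, (α (i + K + 1) - β (i + K + 1)) ≤ r ^ (K + 1) / (1 - r) := by
      have hgeo : Summable (fun i : ℕ => r ^ (K + 1) * r ^ i) :=
        (summable_geometric_of_lt_one hr0.le hr1).mul_left _
      calc ∑' i, (α (i + K + 1) - β (i + K + 1))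
          ≤ ∑' i, r ^ (K + 1) * r ^ i :=
            Summable.tsum_le_tsum hgtail ((summable_nat_add_iff K).mpr Sg1) hgeo
        _ = r ^ (K + 1) * (1 - r)⁻¹ := by
            rw [tsum_mul_left, tsum_geometric_of_lt_one hr0.le hr1]
        _ = r ^ (K + 1) / (1 - r) := by rw [div_eq_mul_inv]
    exact add_le_add hb1 hb2
  -- final constant chase
  have hkeyI := keyIneq r hr0 hr1 N hN s hsdef K hKdef
  set B : ℝ := (3 + 6 / (Real.exp 1 * s * (1 - r))) / s with hBdef
  have hc₀' : c₀ = 1 / (Real.exp 1 * s * (1 - r)) := by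
    have hlr : Real.log r = -s := by rw [hsdef]; ring
    rw [hc₀, hlr,
      show Real.exp 1 * -s * (1 - r) = -(Real.exp 1 * s * (1 - r)) by ring,
      div_neg, neg_div, neg_neg]
  have hc₀pos : 0 < c₀ := by
    rw [hc₀']
    positivity
  have hlog2 : (0:ℝ) < Real.log 2 := Real.log_pos (by norm_num)
  have hlog1r : Real.log (1 - r) ≤ 0 := Real.log_nonpos (by linarith) (by linarith)
  have hctil_ge : 1 / s ≤ ctil := by
    rw [hctil]
    rw [div_le_div_iff₀ hs0 (mul_pos hs0 hlog2)]
    nlinarith [mul_nonneg hs0.le (neg_nonneg.mpr hlog1r), hlog2, hs0]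
  have hBcr : B ≤ cr := by
    rw [hcr, hBdef, hc₀']
    have h1 : (3 + 6 / (Real.exp 1 * s * (1 - r))) / s
        = (6 * (1 / (Real.exp 1 * s * (1 - r))) + 3) * (1 / s) := by
      field_simp
      ring
    rw [h1]
    apply mul_le_mul_of_nonneg_left hctil_ge
    positivity
  have hL0 : 0 < Real.log N := Real.log_pos (by linarith)
  have hfinal : (K : ℝ) / N + r ^ (K + 1) / (1 - r) ≤ cr * Real.log N / N := by
    have h1 : ((K : ℝ) + (N : ℝ) * r ^ (K + 1) / (1 - r)) / N
        = (K : ℝ) / N + r ^ (K + 1) / (1 - r) := by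
      field_simp
    have h2 : ((K : ℝ) + (N : ℝ) * r ^ (K + 1) / (1 - r)) / N ≤ B * Real.log N / N := by
      gcongr
    have h3 : B * Real.log N / N ≤ cr * Real.log N / N := by
      gcongr
    linarith [h1, h2, h3]
  rw [hD]
  exact le_trans habs (le_trans hTb hfinal)
end

section
/- Let μ be a probability measure on [0,1]^d supported on at most k points, and let N ∈ ℕ with N ≥ k. Then there exist points x_1, …, x_N ∈ [0,1]^d such that the empirical measure ν_N satisfies D*_N(μ; ν_N) ≤ k/(2N). -/
open MeasureTheory Set
open scoped ENNReal

/-- The half-open axis-parallel box `[0,b_1) × ⋯ × [0,b_d)` anchored at the origin. -/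
def anchoredBox (d : ℕ) (b : Fin d → ℝ) : Set (Fin d → ℝ) :=
  univ.pi fun i => Ico 0 (b i)

private lemma measure_finset_eq_sum {α : Type*} [MeasurableSpace α]
    [MeasurableSingletonClass α] (μ : Measure α) (t : Finset α) :
    μ (t : Set α) = ∑ y ∈ t, μ {y} := by
  have ht : (t : Set α) = ⋃ y ∈ t, ({y} : Set α) := by ext z; simp
  rw [ht, measure_biUnion_finset]
  · intro i _ j _ hij
    simp [Set.disjoint_singleton, hij]
  · intro y _; exact measurableSet_singleton y

private lemma sum_fin_eq_sum_finset {α β : Type*} [AddCommMonoid β] (s : Finset α)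
    (g : α → β) :
    ∑ j : Fin s.card, g (s.equivFin.symm j : α) = ∑ y ∈ s, g y := by
  rw [← Finset.sum_coe_sort s g]
  exact Equiv.sum_comp s.equivFin.symm (fun a : s => g (a : α))

private lemma abs_sum_subset_le {M : ℕ} (e : Fin M → ℝ) (h0 : ∑ j, e j = 0)
    (T : Finset (Fin M)) : |∑ j ∈ T, e j| ≤ (∑ j, |e j|) / 2 := by
  have hcompl : ∑ j ∈ T, e j + ∑ j ∈ Tᶜ, e j = 0 := by
    rw [Finset.sum_add_sum_compl, h0]
  have h1 : ∑ j ∈ T, e j = ((∑ j ∈ T, e j) - ∑ j ∈ Tᶜ, e j) / 2 := by linarith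
  rw [h1, abs_div, abs_two]
  have h2 : |(∑ j ∈ T, e j) - ∑ j ∈ Tᶜ, e j| ≤ ∑ j ∈ T, |e j| + ∑ j ∈ Tᶜ, |e j| :=
    (abs_sub _ _).trans
      (add_le_add (Finset.abs_sum_le_sum_abs _ _) (Finset.abs_sum_le_sum_abs _ _))
  rw [Finset.sum_add_sum_compl] at h2
  linarith

/-- If `μ` is a probability measure on `[0,1]^d` supported on at most `k` points and
`N ≥ k`, then there are points `x_1, …, x_N ∈ [0,1]^d` whose empirical measure `ν_N`
satisfies `D*_N(μ; ν_N) ≤ k/(2N)`, where the star-discrepancy is the supremum of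
`|μ(A) − ν_N(A)|` over all anchored boxes `A = [0,b_1) × ⋯ × [0,b_d) ⊆ [0,1]^d`. -/
theorem stmt8 (d k N : ℕ) (hkN : k ≤ N)
    (μ : Measure (Fin d → ℝ)) [IsProbabilityMeasure μ]
    (s : Finset (Fin d → ℝ)) (hcard : s.card ≤ k)
    (hsub : (s : Set (Fin d → ℝ)) ⊆ Icc (0 : Fin d → ℝ) 1)
    (hsupp : μ ((s : Set (Fin d → ℝ))ᶜ) = 0) :
    ∃ x : Fin N → (Fin d → ℝ),
      (∀ i, x i ∈ Icc (0 : Fin d → ℝ) 1) ∧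
      ∀ b : Fin d → ℝ, b ∈ Icc (0 : Fin d → ℝ) 1 →
        |(μ (anchoredBox d b)).toReal - ((empMeasure d N x) (anchoredBox d b)).toReal| ≤
          k / (2 * N) := by
  classical
  have hs : MeasurableSet (s : Set (Fin d → ℝ)) := s.finite_toSet.measurableSet
  have hμs : μ (s : Set (Fin d → ℝ)) = 1 := by
    have h := measure_add_measure_compl (μ := μ) hs
    rw [hsupp, add_zero, measure_univ] at h
    exact h
  have hsne : s.Nonempty := by
    rcases s.eq_empty_or_nonempty with h | h
    · exfalso; rw [h] at hμs; simp at hμs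
    · exact h
  have hM : 0 < s.card := Finset.card_pos.mpr hsne
  have hN : 0 < N := lt_of_lt_of_le (lt_of_lt_of_le hM hcard) hkN
  have hNR : (0 : ℝ) < N := by exact_mod_cast hN
  set M := s.card with hMdef
  set q : Fin M → (Fin d → ℝ) := fun j => (s.equivFin.symm j : Fin d → ℝ) with hqdef
  have hq : ∀ j, q j ∈ s := fun j => (s.equivFin.symm j).2
  set p : Fin M → ℝ := fun j => (μ {q j}).toReal with hpdef
  have hfin : ∀ y : Fin d → ℝ, μ {y} ≠ ⊤ := fun y => measure_ne_top μ _
  have hp0 : ∀ j, 0 ≤ p j := fun j => ENNReal.toReal_nonneg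
  have hsum_p : ∑ j, p j = 1 := by
    have h1 : ∑ j : Fin M, μ {q j} = μ (s : Set (Fin d → ℝ)) := by
      rw [measure_finset_eq_sum μ s]
      exact sum_fin_eq_sum_finset s (fun y => μ {y})
    have h2 : ∑ j : Fin M, p j = (∑ j : Fin M, μ {q j}).toReal := by
      rw [ENNReal.toReal_sum (fun a _ => hfin _)]
    rw [h2, h1, hμs, ENNReal.toReal_one]
  -- cumulative sums and floor rounding
  set pe : ℕ → ℝ := fun t => if h : t < M then p ⟨t, h⟩ else 0 with hpedef
  have hpe0 : ∀ t, 0 ≤ pe t := by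
    intro t; simp only [hpedef]; split_ifs with h
    · exact hp0 _
    · exact le_rfl
  set P : ℕ → ℝ := fun t => ∑ i ∈ Finset.range t, pe i with hPdef
  have hPmono : Monotone P := by
    intro a b hab
    exact Finset.sum_le_sum_of_subset_of_nonneg (Finset.range_subset_range.mpr hab)
      (fun i _ _ => hpe0 i)
  have hP0 : ∀ t, 0 ≤ P t := by
    intro t; exact Finset.sum_nonneg fun i _ => hpe0 i
  have hPM : P M = 1 := by
    have : ∑ i ∈ Finset.range M, pe i = ∑ j : Fin M, p j := by
      rw [← Fin.sum_univ_eq_sum_range]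
      exact Finset.sum_congr rfl fun j _ => by simp [hpedef, j.isLt]
    simp only [hPdef]; rw [this, hsum_p]
  set m : ℕ → ℕ := fun t => ⌊(N : ℝ) * P t⌋₊ with hmdef
  have hmmono : Monotone m := fun a b hab =>
    Nat.floor_le_floor (mul_le_mul_of_nonneg_left (hPmono hab) (le_of_lt hNR))
  have hm0 : m 0 = 0 := by simp [hmdef, hPdef]
  have hmM : m M = N := by simp [hmdef, hPM]
  have hfloor_le : ∀ t, (m t : ℝ) ≤ (N : ℝ) * P t := fun t =>
    Nat.floor_le (mul_nonneg (le_of_lt hNR) (hP0 t))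
  have hfloor_lt : ∀ t, (N : ℝ) * P t < m t + 1 := fun t => Nat.lt_floor_add_one _
  set nn : Fin M → ℕ := fun j => m (j.val + 1) - m j.val with hnndef
  have hcastn : ∀ j, (nn j : ℝ) = (m (j.val + 1) : ℝ) - m j.val := fun j =>
    Nat.cast_sub (hmmono (Nat.le_succ _))
  have hnsum : ∑ j : Fin M, nn j = N := by
    have : ∑ j : Fin M, nn j = ∑ i ∈ Finset.range M, (m (i + 1) - m i) :=
      Fin.sum_univ_eq_sum_range (fun i => m (i + 1) - m i) M
    rw [this, Finset.sum_range_tsub hmmono, hm0, hmM, Nat.sub_zero]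
  have hPsucc : ∀ j : Fin M, P (j.val + 1) = P j.val + p j := by
    intro j
    simp only [hPdef]
    rw [Finset.sum_range_succ]
    congr 1
    simp [hpedef, j.isLt]
  have herr : ∀ j, |p j - (nn j : ℝ) / N| ≤ 1 / N := by
    intro j
    have h1 : |(N : ℝ) * p j - nn j| ≤ 1 := by
      rw [hcastn j]
      have hA1 := hfloor_le (j.val + 1)
      have hA2 := hfloor_lt (j.val + 1)
      have hB1 := hfloor_le j.val
      have hB2 := hfloor_lt j.val
      have hNp : (N : ℝ) * p j = N * P (j.val + 1) - N * P j.val := by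
        rw [hPsucc j]; ring
      rw [abs_le]; constructor <;> nlinarith
    have h2 : p j - (nn j : ℝ) / N = ((N : ℝ) * p j - nn j) / N := by
      field_simp
    rw [h2, abs_div, abs_of_pos hNR]
    exact (div_le_div_iff_of_pos_right hNR).mpr h1
  -- construct the point list
  set l : List (Fin d → ℝ) :=
    (List.ofFn fun j : Fin M => List.replicate (nn j) (q j)).flatten with hldef
  have hlen : l.length = N := by
    simp only [hldef, List.length_flatten, List.map_ofFn]
    rw [List.sum_ofFn]
    simpa using hnsum
  set x : Fin N → (Fin d → ℝ) := fun i => l.get (Fin.cast hlen.symm i) with hxdef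
  have hxs : ∀ i, x i ∈ s := by
    intro i
    have hmem : x i ∈ l := l.get_mem _
    simp only [hldef, List.mem_flatten, List.mem_ofFn] at hmem
    obtain ⟨L, ⟨j, hj⟩, hL⟩ := hmem
    rw [← hj] at hL
    rw [List.eq_of_mem_replicate hL]
    exact hq j
  refine ⟨x, fun i => hsub (hxs i), ?_⟩
  intro b hb
  set A := anchoredBox d b with hAdef
  have hA : MeasurableSet A := MeasurableSet.univ_pi fun i => measurableSet_Ico
  -- sum over the constructed points
  have hsumx : ∀ g : (Fin d → ℝ) → ℝ≥0∞,
      ∑ i : Fin N, g (x i) = ∑ j : Fin M, (nn j) • g (q j) := by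
    intro g
    have h1 : ∑ i : Fin N, g (x i) = ∑ i : Fin l.length, g (l.get i) :=
      Fintype.sum_equiv (finCongr hlen.symm) (fun i => g (x i))
        (fun i' => g (l.get i')) (fun i => rfl)
    have h2 : ∑ i : Fin l.length, g (l.get i) = (l.map g).sum := by
      rw [← List.sum_ofFn]
      conv_rhs => rw [← List.ofFn_get l]
      rw [List.map_ofFn]
      rfl
    rw [h1, h2, hldef]
    rw [List.map_flatten]
    simp [List.map_ofFn, List.sum_flatten, List.sum_ofFn, Function.comp,
      List.map_replicate, List.sum_replicate]
  -- empirical measure value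
  have hemp : ((empMeasure d N x) A).toReal =
      ∑ j : Fin M, (if q j ∈ A then (nn j : ℝ) / N else 0) := by
    have h1 : (empMeasure d N x) A = (N : ℝ≥0∞)⁻¹ * ∑ i : Fin N, Measure.dirac (x i) A := by
      simp [empMeasure, Measure.finset_sum_apply]
    have h2 : ∑ i : Fin N, Measure.dirac (x i) A = ∑ i : Fin N, A.indicator 1 (x i) :=
      Finset.sum_congr rfl fun i _ => Measure.dirac_apply' _ hA
    have h3 : ∑ i : Fin N, A.indicator (1 : (Fin d → ℝ) → ℝ≥0∞) (x i)
        = ∑ j : Fin M, (if q j ∈ A then (nn j : ℝ≥0∞) else 0) := by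
      rw [hsumx (A.indicator 1)]
      refine Finset.sum_congr rfl fun j _ => ?_
      by_cases h : q j ∈ A <;> simp [Set.indicator_apply, h]
    rw [h1, h2, h3]
    rw [ENNReal.toReal_mul, ENNReal.toReal_sum]
    · rw [Finset.mul_sum]
      refine Finset.sum_congr rfl fun j _ => ?_
      by_cases h : q j ∈ A <;>
        simp [h, ENNReal.toReal_inv, div_eq_mul_inv, mul_comm]
    · intro a _
      split_ifs <;> simp
  -- measure value
  have hμA : (μ A).toReal = ∑ j : Fin M, (if q j ∈ A then p j else 0) := by
    have hd : μ (A \ (s : Set (Fin d → ℝ))) = 0 :=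
      measure_mono_null (fun y hy => hy.2) hsupp
    have h1 : μ A = μ (A ∩ (s : Set (Fin d → ℝ))) := by
      have := measure_inter_add_diff A hs (μ := μ)
      rw [hd, add_zero] at this
      exact this.symm
    have h2 : A ∩ (s : Set (Fin d → ℝ)) = ((s.filter (· ∈ A) : Finset _) : Set _) := by
      ext y; simp [Finset.mem_filter, and_comm]
    have h3 : μ A = ∑ y ∈ s.filter (· ∈ A), μ {y} := by
      rw [h1, h2, measure_finset_eq_sum]
    have h4 : μ A = ∑ y ∈ s, (if y ∈ A then μ {y} else 0) := by
      rw [h3, Finset.sum_filter]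
    have h5 : μ A = ∑ j : Fin M, (if q j ∈ A then μ {q j} else 0) := by
      rw [h4, ← sum_fin_eq_sum_finset s (fun y => if y ∈ A then μ {y} else 0)]
    rw [h5, ENNReal.toReal_sum]
    · exact Finset.sum_congr rfl fun j _ => by split_ifs <;> simp [hpdef]
    · intro a _; split_ifs
      · exact hfin _
      · simp
  -- final estimate
  set e : Fin M → ℝ := fun j => p j - (nn j : ℝ) / N with hedef
  have hsume : ∑ j, e j = 0 := by
    simp only [hedef]
    rw [Finset.sum_sub_distrib, hsum_p, ← Finset.sum_div]
    have : ∑ j : Fin M, (nn j : ℝ) = (N : ℝ) := by exact_mod_cast congrArg Nat.cast hnsum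
    rw [this, div_self (ne_of_gt hNR)]
    ring
  have hdiff : (μ A).toReal - ((empMeasure d N x) A).toReal
      = ∑ j ∈ Finset.univ.filter (fun j => q j ∈ A), e j := by
    rw [hμA, hemp, ← Finset.sum_sub_distrib, Finset.sum_filter]
    refine Finset.sum_congr rfl fun j _ => ?_
    split_ifs <;> simp [hedef]
  rw [hdiff]
  calc |∑ j ∈ Finset.univ.filter (fun j => q j ∈ A), e j|
      ≤ (∑ j, |e j|) / 2 := abs_sum_subset_le e hsume _
    _ ≤ ((M : ℝ) * (1 / N)) / 2 := by
        have : ∑ j : Fin M, |e j| ≤ ∑ j : Fin M, (1 / (N : ℝ)) :=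
          Finset.sum_le_sum fun j _ => herr j
        have h' : ∑ j : Fin M, |e j| ≤ (M : ℝ) * (1 / N) := by simpa using this
        linarith
    _ = (M : ℝ) / (2 * N) := by
        rw [mul_one_div, div_div, mul_comm (N : ℝ) 2]
    _ ≤ (k : ℝ) / (2 * N) := by
        have hMk : (M : ℝ) ≤ (k : ℝ) := by exact_mod_cast hcard
        have h2N : (0 : ℝ) < 2 * N := by positivity
        rw [div_le_div_iff₀ h2N h2N]
        nlinarith
end
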